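/- For every probability distribution p_1 ≥ p_2 ≥ ⋯ ≥ p_N ≥ 0 on {1,…,N} and every lying probability 0 ≤ p ≤ 1/2, the zigzag query is almost optimal: G_ZZ(X) ≤ G_opt(X) + (1/4)·(1−2p). -/

import Mathlib

open Finset

noncomputable def guess (N : ℕ) (q : Fin N → ℝ) : ℝ :=
  Finset.univ.inf' ⟨1, Finset.mem_univ 1⟩
    (fun σ : Equiv.Perm (Fin N) => ∑ k : Fin N, ((k : ℝ) + 1) * q (σ k))

noncomputable def guessA (N : ℕ) (q : Fin N → ℝ) (p : ℝ) (A : Finset (Fin N)) : ℝ :=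
  ∑ y : Bool, Finset.univ.inf' ⟨1, Finset.mem_univ 1⟩
    (fun σ : Equiv.Perm (Fin N) => ∑ k : Fin N,
      ((k : ℝ) + 1) * q (σ k) * (if ((σ k ∈ A) ↔ (y = true)) then 1 - p else p))

noncomputable def guessOpt (N : ℕ) (q : Fin N → ℝ) (p : ℝ) : ℝ :=
  Finset.univ.inf' ⟨∅, Finset.mem_univ ∅⟩ (fun A : Finset (Fin N) => guessA N q p A)

def zigzag (N : ℕ) : Finset (Fin N) := Finset.univ.filter (fun k => (k : ℕ) % 2 = 0)

noncomputable def wt (N : ℕ) (q : Fin N → ℝ) (p : ℝ) (i j : Fin N) : ℝ :=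
  max 0 ((1 - p) * min (q i) (q j) - p * max (q i) (q j))

noncomputable def cut (N : ℕ) (q : Fin N → ℝ) (p : ℝ) (A : Finset (Fin N)) : ℝ :=
  ∑ i ∈ A, ∑ j ∈ Aᶜ, wt N q p i j

noncomputable def maxcut (N : ℕ) (q : Fin N → ℝ) (p : ℝ) : ℝ :=
  Finset.univ.sup' ⟨∅, Finset.mem_univ ∅⟩ (fun A : Finset (Fin N) => cut N q p A)


/-- telescoping sum over Ico -/
lemma tele_Ico (f : ℕ → ℝ) (a b : ℕ) (h : a ≤ b) :
    ∑ i ∈ Finset.Ico a b, (f (i+1) - f i) = f b - f a := by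
  induction b, h using Nat.le_induction with
  | base => simp
  | succ b hab ih => rw [Finset.sum_Ico_succ_top hab, ih]; ring

/-- key telescoping identity -/
lemma tele_key (V : ℕ → ℝ) (M : ℕ) (hM : 1 ≤ M) (hmono : Monotone V)
    (x y : ℝ) (hx : ∃ a, a < M ∧ V a = x) (hy : ∃ b, b < M ∧ V b = y) :
    ∑ k ∈ Finset.range (M-1), (V (k+1) - V k) * (if x ≤ V k ∧ V (k+1) ≤ y then 1 else 0)
      = max 0 (y - x) := by
  obtain ⟨a0, ha0M, ha0⟩ := hx
  obtain ⟨b0, hb0M, hb0⟩ := hy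
  have hex : ∃ n, x ≤ V n := ⟨a0, ha0.ge⟩
  set a := Nat.find hex with hadef
  have haP : x ≤ V a := Nat.find_spec hex
  have hamin : ∀ k, x ≤ V k → a ≤ k := fun k hk => Nat.find_le hk
  have haa0 : a ≤ a0 := hamin a0 ha0.ge
  have hVa : V a = x := le_antisymm (ha0 ▸ hmono haa0) haP
  -- b : max index in range M with V b ≤ y
  have hne : ((Finset.range M).filter (fun k => V k ≤ y)).Nonempty :=
    ⟨b0, by simp [Finset.mem_filter, hb0M, hb0.le]⟩
  set b := ((Finset.range M).filter (fun k => V k ≤ y)).max' hne with hbdef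
  have hbmem := Finset.max'_mem _ hne
  rw [Finset.mem_filter, Finset.mem_range] at hbmem
  have hbM : b < M := hbmem.1
  have hbP : V b ≤ y := hbmem.2
  have hbmax : ∀ k, k < M → V k ≤ y → k ≤ b := fun k hk hVk =>
    Finset.le_max' _ k (by simp [Finset.mem_filter, hk, hVk])
  have hb0b : b0 ≤ b := hbmax b0 hb0M hb0.le
  have hVb : V b = y := le_antisymm hbP (hb0 ▸ hmono hb0b)
  have hfilter : (Finset.range (M-1)).filter (fun k => x ≤ V k ∧ V (k+1) ≤ y)
      = Finset.Ico a b := by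
    ext k
    simp only [Finset.mem_filter, Finset.mem_range, Finset.mem_Ico]
    constructor
    · rintro ⟨hkM, h1, h2⟩
      exact ⟨hamin k h1, Nat.lt_of_succ_le (hbmax (k+1) (by omega) h2)⟩
    · rintro ⟨h1, h2⟩
      refine ⟨by omega, hVa ▸ hmono h1, ?_⟩
      exact le_trans (hmono (Nat.succ_le_of_lt h2)) hbP
  simp_rw [mul_ite, mul_one, mul_zero]
  rw [← Finset.sum_filter, hfilter]
  rcases le_or_gt a b with hab | hab
  · rw [tele_Ico V a b hab, hVa, hVb, max_eq_right (by rw [← hVa, ← hVb]; exact sub_nonneg.2 (hmono hab))]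
  · rw [Finset.Ico_eq_empty (by omega), Finset.sum_empty]
    rw [max_eq_left]
    rw [← hVa, ← hVb]
    exact sub_nonpos.2 (hmono hab.le)

/-- sum of (-1)^i over a convex finset of ℕ has absolute value ≤ 1 -/
lemma convex_sign_sum (S : Finset ℕ) (hconv : ∀ i j k, i ∈ S → j ∈ S → i ≤ k → k ≤ j → k ∈ S) :
    |∑ i ∈ S, (-1 : ℤ)^i| ≤ 1 := by
  rcases S.eq_empty_or_nonempty with rfl | hS
  · simp
  have hIcc : S = Finset.Icc (S.min' hS) (S.max' hS) := by
    ext k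
    simp only [Finset.mem_Icc]
    constructor
    · intro hk; exact ⟨Finset.min'_le S k hk, Finset.le_max' S k hk⟩
    · rintro ⟨h1, h2⟩
      exact hconv _ _ _ (S.min'_mem hS) (S.max'_mem hS) h1 h2
  rw [hIcc]
  set a := S.min' hS
  set b := S.max' hS
  have hab : a ≤ b := Finset.min'_le S b (S.max'_mem hS)
  have : Finset.Icc a b = Finset.Ico a (b+1) := by rw [Finset.Ico_add_one_right_eq_Icc]
  rw [this, Finset.sum_Ico_eq_sub _ (by omega), neg_one_geom_sum, neg_one_geom_sum]
  rcases Nat.even_or_odd (b+1) with h1 | h1 <;> rcases Nat.even_or_odd a with h2 | h2 <;>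
    simp [h1, h2, Nat.not_even_iff_odd.mpr, *] <;> omega



lemma int_count (n s z : ℤ) (hs0 : 0 ≤ s) (hsn : s ≤ n) (hz0 : 0 ≤ z) (hzn : z ≤ n)
    (hv : |n - 2*z| ≤ 1) : s*(n-s) ≤ z*(n-z) := by
  have hv' := abs_le.mp hv
  have h3 : n - 2*z = -1 ∨ n - 2*z = 0 ∨ n - 2*z = 1 := by omega
  rcases h3 with h | h | h
  · have hu : n - 2*s ≠ 0 := by omega
    have h1 : 1 ≤ (n - 2*s)^2 := by rcases lt_or_gt_of_ne hu with h' | h' <;> nlinarith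
    nlinarith
  · nlinarith [sq_nonneg (s - z)]
  · have hu : n - 2*s ≠ 0 := by omega
    have h1 : 1 ≤ (n - 2*s)^2 := by rcases lt_or_gt_of_ne hu with h' | h' <;> nlinarith
    nlinarith

lemma card_cut_le (N : ℕ) (Pk : Fin N → Prop) [DecidablePred Pk]
    (hconv : ∀ i j k : Fin N, Pk i → Pk j → i ≤ k → k ≤ j → Pk k) (A : Finset (Fin N)) :
    ((A.filter Pk).card : ℝ) * ((Aᶜ.filter Pk).card) ≤
      (((zigzag N).filter Pk).card : ℝ) * ((((zigzag N))ᶜ.filter Pk).card) := by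
  set W : Finset (Fin N) := Finset.univ.filter Pk with hW
  have hsplit : ∀ B : Finset (Fin N), (B.filter Pk).card + (Bᶜ.filter Pk).card = W.card := by
    intro B
    rw [← Finset.card_union_of_disjoint (Finset.disjoint_filter_filter
      (disjoint_compl_right)), ← Finset.filter_union, Finset.union_compl]
  -- sign sum
  have hsign : (((zigzag N).filter Pk).card : ℤ) - ((((zigzag N))ᶜ.filter Pk).card : ℤ)
      = ∑ i ∈ W, (-1 : ℤ)^(i : ℕ) := by
    rw [← Finset.sum_filter_add_sum_filter_not W (fun i => i ∈ zigzag N)]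
    have e1 : W.filter (fun i => i ∈ zigzag N) = (zigzag N).filter Pk := by
      ext i; simp [hW, zigzag, Finset.mem_filter, and_comm]
    have e2 : W.filter (fun i => i ∉ zigzag N) = ((zigzag N))ᶜ.filter Pk := by
      ext i; simp [hW, zigzag, Finset.mem_filter, and_comm]
    rw [e1, e2]
    have g1 : ∑ i ∈ (zigzag N).filter Pk, (-1:ℤ)^(i:ℕ) = ∑ _i ∈ (zigzag N).filter Pk, (1:ℤ) := by
      apply Finset.sum_congr rfl
      intro i hi
      rw [Finset.mem_filter] at hi
      have h2 : (i : ℕ) % 2 = 0 := by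
        have := hi.1; simpa [zigzag, Finset.mem_filter] using this
      exact Even.neg_one_pow (Nat.even_iff.mpr h2)
    have g2 : ∑ i ∈ ((zigzag N))ᶜ.filter Pk, (-1:ℤ)^(i:ℕ)
        = ∑ _i ∈ ((zigzag N))ᶜ.filter Pk, (-1:ℤ) := by
      apply Finset.sum_congr rfl
      intro i hi
      rw [Finset.mem_filter] at hi
      have h2 : ¬ ((i : ℕ) % 2 = 0) := by
        have := hi.1; simpa [zigzag, Finset.mem_filter, Finset.mem_compl] using this
      exact Odd.neg_one_pow (Nat.odd_iff.mpr (by omega))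
    rw [g1, g2, Finset.sum_const, Finset.sum_const]
    push_cast
    ring
  -- transfer sign sum to ℕ and bound
  have habs : |∑ i ∈ W, (-1 : ℤ)^(i : ℕ)| ≤ 1 := by
    have himg := Finset.sum_image (s := W) (g := Fin.val) (f := fun m => (-1 : ℤ)^m)
      (fun x _ y _ h => Fin.val_injective h)
    rw [← himg]
    apply convex_sign_sum
    intro i j k hi hj hik hkj
    simp only [Finset.mem_image] at hi hj ⊢
    obtain ⟨i', hi', rfl⟩ := hi
    obtain ⟨j', hj', rfl⟩ := hj
    have hkN : k < N := lt_of_le_of_lt hkj j'.isLt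
    refine ⟨⟨k, hkN⟩, ?_, rfl⟩
    rw [hW, Finset.mem_filter] at hi' hj' ⊢
    exact ⟨Finset.mem_univ _, hconv i' j' ⟨k, hkN⟩ hi'.2 hj'.2 (by exact hik) (by exact hkj)⟩
  -- conclude via int_count
  have hA := hsplit A
  have hZ := hsplit (zigzag N)
  have key : ((A.filter Pk).card : ℤ) * ((Aᶜ.filter Pk).card : ℤ) ≤
      (((zigzag N).filter Pk).card : ℤ) * ((((zigzag N))ᶜ.filter Pk).card : ℤ) := by
    have h1 : ((Aᶜ.filter Pk).card : ℤ) = (W.card : ℤ) - (A.filter Pk).card := by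
      omega
    have h2 : ((((zigzag N))ᶜ.filter Pk).card : ℤ) = (W.card : ℤ) - ((zigzag N).filter Pk).card := by
      omega
    rw [h1, h2]
    apply int_count
    · positivity
    · omega
    · positivity
    · omega
    · have h3 : (W.card : ℤ) - 2*(((zigzag N).filter Pk).card : ℤ)
          = -((((zigzag N).filter Pk).card : ℤ) - ((((zigzag N))ᶜ.filter Pk).card : ℤ)) := by
        omega
      rw [h3, abs_neg]
      rw [← hsign] at habs
      exact hsign ▸ habs
  exact_mod_cast key


lemma cut_le_zigzag (N : ℕ) (hN : 1 ≤ N) (q : Fin N → ℝ)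
    (hsort : ∀ i j : Fin N, i ≤ j → q j ≤ q i)
    (p : ℝ) (hp0 : 0 ≤ p) (hp : p ≤ 1 / 2) (A : Finset (Fin N)) :
    cut N q p A ≤ cut N q p (zigzag N) := by
  have h1p : (0:ℝ) ≤ 1 - p := by linarith
  set x : Fin N → ℝ := fun i => q i * p with hx
  set y : Fin N → ℝ := fun i => q i * (1 - p) with hy
  set M := N + N with hM
  have hM1 : 1 ≤ M := by omega
  -- the merged sorted list
  set z' : Fin M → ℝ := fun k => Sum.elim x y (finSumFinEquiv.symm k) with hz'
  have hvmono : Monotone (z' ∘ Tuple.sort z') := Tuple.monotone_sort z'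
  set V : ℕ → ℝ := fun k => (z' ∘ Tuple.sort z') ⟨min k (M-1), by omega⟩ with hV
  have hVmono : Monotone V := by
    intro k l hkl
    exact hvmono (by simp [Fin.le_def]; omega)
  have hVrange : ∀ j : Fin M, ∃ a, a < M ∧ V a = z' j := by
    intro j
    refine ⟨((Tuple.sort z')⁻¹ j : Fin M), Fin.is_lt _, ?_⟩
    have : min (((Tuple.sort z')⁻¹ j : Fin M) : ℕ) (M-1) = (((Tuple.sort z')⁻¹ j : Fin M) : ℕ) := by
      have := Fin.is_lt ((Tuple.sort z')⁻¹ j); omega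
    simp only [hV, Function.comp_apply, this]
    rw [show (⟨(((Tuple.sort z')⁻¹ j : Fin M) : ℕ), by omega⟩ : Fin M) = (Tuple.sort z')⁻¹ j
      from Fin.ext rfl]
    simp
  have hxrange : ∀ i : Fin N, ∃ a, a < M ∧ V a = x i := by
    intro i
    obtain ⟨a, ha, hva⟩ := hVrange (finSumFinEquiv (Sum.inl i))
    refine ⟨a, ha, ?_⟩
    rw [hva]
    simp only [hz', Equiv.symm_apply_apply, Sum.elim_inl]
  have hyrange : ∀ i : Fin N, ∃ a, a < M ∧ V a = y i := by
    intro i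
    obtain ⟨a, ha, hva⟩ := hVrange (finSumFinEquiv (Sum.inr i))
    refine ⟨a, ha, ?_⟩
    rw [hva]
    simp only [hz', Equiv.symm_apply_apply, Sum.elim_inr]
  -- the window predicate
  set P : ℕ → Fin N → Prop := fun k i => x i ≤ V k ∧ V (k+1) ≤ y i with hP
  have hPdec : ∀ k, DecidablePred (P k) := fun k i => instDecidableAnd
  -- wt decomposition
  have hwt : ∀ i j : Fin N, wt N q p i j
      = ∑ k ∈ Finset.range (M-1), (V (k+1) - V k) * (if P k i ∧ P k j then 1 else 0) := by
    intro i j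
    have e1 : wt N q p i j = max 0 (min (y i) (y j) - max (x i) (x j)) := by
      rw [wt, hx, hy]
      congr 1
      rw [← min_mul_of_nonneg _ _ h1p, ← max_mul_of_nonneg _ _ hp0]
      ring_nf
    rw [e1, ← tele_key V M hM1 hVmono (max (x i) (x j)) (min (y i) (y j)) ?_ ?_]
    · apply Finset.sum_congr rfl
      intro k _
      congr 1
      have : (max (x i) (x j) ≤ V k ∧ V (k+1) ≤ min (y i) (y j)) ↔ (P k i ∧ P k j) := by
        simp only [hP, max_le_iff, le_min_iff]
        tauto
      exact if_congr this rfl rfl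
    · rcases max_choice (x i) (x j) with h | h <;> rw [h]
      exacts [hxrange i, hxrange j]
    · rcases min_choice (y i) (y j) with h | h <;> rw [h]
      exacts [hyrange i, hyrange j]
  -- cut decomposition
  have hcut : ∀ B : Finset (Fin N), cut N q p B
      = ∑ k ∈ Finset.range (M-1), (V (k+1) - V k) *
          (((B.filter (P k)).card : ℝ) * ((Bᶜ.filter (P k)).card)) := by
    intro B
    rw [cut]
    simp_rw [hwt]
    have e : ∀ i : Fin N, ∑ j ∈ Bᶜ, ∑ k ∈ Finset.range (M-1),
          (V (k+1) - V k) * (if P k i ∧ P k j then (1:ℝ) else 0)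
        = ∑ k ∈ Finset.range (M-1), ∑ j ∈ Bᶜ,
          (V (k+1) - V k) * (if P k i ∧ P k j then (1:ℝ) else 0) :=
      fun i => Finset.sum_comm
    simp_rw [e]
    rw [Finset.sum_comm]
    apply Finset.sum_congr rfl
    intro k _
    have hsplitif : ∀ i j : Fin N, (if P k i ∧ P k j then (1:ℝ) else 0)
        = (if P k i then (1:ℝ) else 0) * (if P k j then (1:ℝ) else 0) := by
      intro i j
      by_cases h1 : P k i
      · by_cases h2 : P k j
        · rw [if_pos (⟨h1, h2⟩ : P k i ∧ P k j), if_pos h1, if_pos h2, one_mul]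
        · rw [if_neg (fun h => h2 h.2), if_pos h1, if_neg h2, one_mul]
      · rw [if_neg (fun h => h1 h.1), if_neg h1, zero_mul]
    calc ∑ i ∈ B, ∑ j ∈ Bᶜ, (V (k+1) - V k) * (if P k i ∧ P k j then (1:ℝ) else 0)
        = (V (k+1) - V k) * ∑ i ∈ B, ∑ j ∈ Bᶜ,
            (if P k i then (1:ℝ) else 0) * (if P k j then (1:ℝ) else 0) := by
          rw [Finset.mul_sum]
          apply Finset.sum_congr rfl; intro i _
          rw [Finset.mul_sum]
          apply Finset.sum_congr rfl; intro j _
          rw [hsplitif]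
      _ = (V (k+1) - V k) * (((B.filter (P k)).card : ℝ) * ((Bᶜ.filter (P k)).card)) := by
          rw [← Finset.sum_mul_sum, Finset.sum_boole, Finset.sum_boole]
  rw [hcut A, hcut (zigzag N)]
  apply Finset.sum_le_sum
  intro k _
  have hd : 0 ≤ V (k+1) - V k := sub_nonneg.2 (hVmono (Nat.le_succ k))
  apply mul_le_mul_of_nonneg_left _ hd
  apply card_cut_le
  intro i j l hi hj hij hjl
  exact ⟨le_trans (mul_le_mul_of_nonneg_right (hsort i l hij) hp0) hi.1,
         le_trans hj.2 (mul_le_mul_of_nonneg_right (hsort l j hjl) h1p)⟩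

variable {N : ℕ}

/-- the set of ordered pairs i < j -/
def PS (N : ℕ) : Finset (Fin N × Fin N) :=
  (Finset.univ ×ˢ Finset.univ).filter (fun z => z.1 < z.2)

lemma coeff_sum (c : Fin N → ℝ) :
    ∑ k : Fin N, ((k : ℝ) + 1) * c k = ∑ k, c k + ∑ z ∈ PS N, c z.2 := by
  have h1 : ∑ z ∈ PS N, c z.2
      = ∑ k : Fin N, ∑ i ∈ Finset.Iio k, c k := by
    rw [PS, Finset.sum_filter, Finset.sum_product]
    rw [Finset.sum_comm]
    apply Finset.sum_congr rfl
    intro k _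
    rw [← Finset.sum_filter]
    apply Finset.sum_congr _ (fun _ _ => rfl)
    ext i; simp
  rw [h1]
  rw [← Finset.sum_add_distrib]
  apply Finset.sum_congr rfl
  intro k _
  rw [Finset.sum_const, nsmul_eq_mul, Fin.card_Iio]
  ring

lemma PS_perm_invariance (a : Fin N → ℝ) (σ : Equiv.Perm (Fin N)) :
    ∑ z ∈ PS N, min (a (σ z.1)) (a (σ z.2)) = ∑ z ∈ PS N, min (a z.1) (a z.2) := by
  apply Finset.sum_bij'
    (i := fun z _ => if σ z.1 < σ z.2 then (σ z.1, σ z.2) else (σ z.2, σ z.1))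
    (j := fun z _ => if σ⁻¹ z.1 < σ⁻¹ z.2 then (σ⁻¹ z.1, σ⁻¹ z.2) else (σ⁻¹ z.2, σ⁻¹ z.1))
  · intro z hz
    rw [PS, Finset.mem_filter] at hz ⊢
    refine ⟨Finset.mem_product.2 ⟨Finset.mem_univ _, Finset.mem_univ _⟩, ?_⟩
    have hne : σ z.1 ≠ σ z.2 := fun h => (ne_of_lt hz.2) (σ.injective h)
    rcases lt_or_gt_of_ne hne with h | h
    · rw [if_pos h]; exact h
    · rw [if_neg (not_lt.2 h.le)]; exact h
  · intro z hz
    rw [PS, Finset.mem_filter] at hz ⊢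
    refine ⟨Finset.mem_product.2 ⟨Finset.mem_univ _, Finset.mem_univ _⟩, ?_⟩
    have hne : σ⁻¹ z.1 ≠ σ⁻¹ z.2 := fun h => (ne_of_lt hz.2) (σ⁻¹.injective h)
    rcases lt_or_gt_of_ne hne with h | h
    · rw [if_pos h]; exact h
    · rw [if_neg (not_lt.2 h.le)]; exact h
  · intro z hz
    rw [PS, Finset.mem_filter] at hz
    by_cases h : σ z.1 < σ z.2
    · rw [if_pos h]
      simp only [Equiv.Perm.coe_inv, Equiv.symm_apply_apply]
      rw [if_pos hz.2]
    · rw [if_neg h]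
      simp only [Equiv.Perm.coe_inv, Equiv.symm_apply_apply]
      rw [if_neg (not_lt.2 hz.2.le)]
  · intro z hz
    rw [PS, Finset.mem_filter] at hz
    by_cases h : σ⁻¹ z.1 < σ⁻¹ z.2
    · rw [if_pos h]
      simp only [Equiv.Perm.coe_inv, Equiv.apply_symm_apply]
      rw [if_pos hz.2]
    · rw [if_neg h]
      simp only [Equiv.Perm.coe_inv, Equiv.apply_symm_apply]
      rw [if_neg (not_lt.2 hz.2.le)]
  · intro z hz
    by_cases h : σ z.1 < σ z.2
    · rw [if_pos h]
    · rw [if_neg h]; exact min_comm _ _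

lemma inf_perm_formula (a : Fin N → ℝ) :
    Finset.univ.inf' ⟨1, Finset.mem_univ 1⟩
      (fun σ : Equiv.Perm (Fin N) => ∑ k : Fin N, ((k : ℝ) + 1) * a (σ k))
    = ∑ i, a i + ∑ z ∈ PS N, min (a z.1) (a z.2) := by
  apply le_antisymm
  · -- pick the sorting permutation composed with reversal
    set σ : Equiv.Perm (Fin N) := (Fin.revPerm : Equiv.Perm (Fin N)).trans (Tuple.sort a) with hσ
    have hanti : Antitone (a ∘ σ) := by
      intro i j hij
      have := Tuple.monotone_sort a (a := Fin.rev j) (b := Fin.rev i) (Fin.rev_le_rev.2 hij)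
      simpa [hσ] using this
    refine le_trans (Finset.inf'_le _ (Finset.mem_univ σ)) ?_
    rw [coeff_sum (fun k => a (σ k))]
    have e1 : ∑ k : Fin N, a (σ k) = ∑ i, a i := Equiv.sum_comp σ a
    have e2 : ∑ z ∈ PS N, a (σ z.2) = ∑ z ∈ PS N, min (a z.1) (a z.2) := by
      rw [← PS_perm_invariance a σ]
      apply Finset.sum_congr rfl
      intro z hz
      rw [PS, Finset.mem_filter] at hz
      exact (min_eq_right (hanti hz.2.le)).symm
    rw [e1, e2]
  · apply Finset.le_inf'
    intro σ _
    rw [coeff_sum (fun k => a (σ k))]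
    have e1 : ∑ k : Fin N, a (σ k) = ∑ i, a i := Equiv.sum_comp σ a
    rw [e1]
    apply add_le_add_right
    rw [← PS_perm_invariance a σ]
    apply Finset.sum_le_sum
    intro z _
    exact min_le_right _ _

lemma cross_pair (a b p : ℝ) (ha : 0 ≤ a) (hb : 0 ≤ b) (hp0 : 0 ≤ p) (hp : p ≤ 1/2) :
    min (a*(1-p)) (b*p) + min (a*p) (b*(1-p))
      = min a b - max 0 ((1-p) * min a b - p * max a b) := by
  rcases le_total a b with h | h
  · rw [min_eq_left h, max_eq_right h]
    have h2 : min (a*p) (b*(1-p)) = a*p :=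
      min_eq_left (le_trans (mul_le_mul_of_nonneg_right h hp0)
        (mul_le_mul_of_nonneg_left (by linarith) hb))
    rw [h2]
    rcases le_total (a*(1-p)) (b*p) with h3 | h3
    · rw [min_eq_left h3, max_eq_left (by nlinarith)]; ring
    · rw [min_eq_right h3, max_eq_right (by nlinarith)]; ring
  · rw [min_eq_right h, max_eq_left h]
    have h2 : min (a*(1-p)) (b*p) = b*p :=
      min_eq_right (le_trans (mul_le_mul_of_nonneg_right h hp0)
        (mul_le_mul_of_nonneg_left (by linarith) ha))
    rw [h2]
    rcases le_total (a*p) (b*(1-p)) with h3 | h3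
    · rw [min_eq_left h3, max_eq_right (by nlinarith)]; ring
    · rw [min_eq_right h3, max_eq_left (by nlinarith)]; ring

lemma wt_symm (N : ℕ) (q : Fin N → ℝ) (p : ℝ) (i j : Fin N) : wt N q p i j = wt N q p j i := by
  rw [wt, wt, min_comm (q i) (q j), max_comm (q i) (q j)]

lemma PS_cut (N : ℕ) (q : Fin N → ℝ) (p : ℝ) (A : Finset (Fin N)) :
    ∑ z ∈ PS N, (if ((z.1 ∈ A) ↔ (z.2 ∈ A)) then 0 else wt N q p z.1 z.2)
      = cut N q p A := by
  set g : Fin N × Fin N → ℝ :=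
    fun z => if ((z.1 ∈ A) ↔ (z.2 ∈ A)) then 0 else wt N q p z.1 z.2 with hg
  have hgsymm : ∀ z : Fin N × Fin N, g (z.2, z.1) = g z := by
    intro z
    by_cases h : (z.1 ∈ A) ↔ (z.2 ∈ A)
    · rw [hg]; simp only [if_pos h, if_pos (Iff.symm h)]
    · rw [hg]; simp only [if_neg h, if_neg (fun h' => h (Iff.symm h'))]
      exact wt_symm N q p z.2 z.1
  have hsum2 : ∑ i : Fin N, ∑ j : Fin N, g (i, j) = 2 * ∑ z ∈ PS N, g z := by
    rw [← Finset.sum_product']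
    rw [← Finset.sum_filter_add_sum_filter_not (Finset.univ ×ˢ Finset.univ)
      (fun z => z.1 < z.2)]
    have e0 : (Finset.univ ×ˢ Finset.univ).filter (fun z : Fin N × Fin N => z.1 < z.2) = PS N := rfl
    rw [e0]
    have e1 : ∑ z ∈ (Finset.univ ×ˢ Finset.univ).filter (fun z : Fin N × Fin N => ¬ z.1 < z.2), g z
        = ∑ z ∈ (Finset.univ ×ˢ Finset.univ).filter (fun z : Fin N × Fin N => z.1 ≤ z.2), g (z.2, z.1) := by
      apply Finset.sum_nbij' (i := fun z => (z.2, z.1)) (j := fun z => (z.2, z.1))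
      · intro z hz
        rw [Finset.mem_filter] at hz ⊢
        exact ⟨Finset.mem_product.2 ⟨Finset.mem_univ _, Finset.mem_univ _⟩, not_lt.1 hz.2⟩
      · intro z hz
        rw [Finset.mem_filter] at hz ⊢
        exact ⟨Finset.mem_product.2 ⟨Finset.mem_univ _, Finset.mem_univ _⟩, not_lt.2 hz.2⟩
      · intro z _; rfl
      · intro z _; rfl
      · intro z _; rfl
    rw [e1]
    have e2 : ∑ z ∈ (Finset.univ ×ˢ Finset.univ).filter (fun z : Fin N × Fin N => z.1 ≤ z.2), g (z.2, z.1)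
        = ∑ z ∈ PS N, g z + ∑ z ∈ (Finset.univ ×ˢ Finset.univ).filter (fun z : Fin N × Fin N => z.1 = z.2), g z := by
      rw [← Finset.sum_filter_add_sum_filter_not ((Finset.univ ×ˢ Finset.univ).filter
        (fun z : Fin N × Fin N => z.1 ≤ z.2)) (fun z => z.1 < z.2), Finset.filter_filter,
        Finset.filter_filter]
      congr 1
      · rw [← e0]
        have hfeq : (Finset.univ ×ˢ Finset.univ).filter
              (fun z : Fin N × Fin N => z.1 ≤ z.2 ∧ z.1 < z.2)
            = (Finset.univ ×ˢ Finset.univ).filter (fun z : Fin N × Fin N => z.1 < z.2) := by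
          apply Finset.filter_congr
          intro z _
          constructor
          · rintro ⟨_, h⟩; exact h
          · intro h; exact ⟨h.le, h⟩
        rw [hfeq]
        exact Finset.sum_congr rfl (fun z _ => hgsymm z)
      · apply Finset.sum_congr
        · apply Finset.filter_congr
          intro z _
          constructor
          · rintro ⟨h1, h2⟩; exact le_antisymm h1 (not_lt.1 h2)
          · rintro h; exact ⟨le_of_eq h, by rw [h]; exact lt_irrefl _⟩
        · intro z _
          exact hgsymm z
    rw [e2]
    have e3 : ∑ z ∈ (Finset.univ ×ˢ Finset.univ).filter (fun z : Fin N × Fin N => z.1 = z.2), g z = 0 := by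
      apply Finset.sum_eq_zero
      intro z hz
      rw [Finset.mem_filter] at hz
      rw [hg]
      simp [hz.2]
    rw [e3]
    ring
  have hsum3 : ∑ i : Fin N, ∑ j : Fin N, g (i, j) = 2 * cut N q p A := by
    have inner : ∀ i : Fin N, ∑ j : Fin N, g (i, j)
        = (if i ∈ A then ∑ j ∈ Aᶜ, wt N q p i j else ∑ j ∈ A, wt N q p i j) := by
      intro i
      rw [← Finset.sum_filter_add_sum_filter_not Finset.univ (fun j => j ∈ A)]
      have hA : Finset.univ.filter (fun j : Fin N => j ∈ A) = A := by ext j; simp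
      have hAc : Finset.univ.filter (fun j : Fin N => j ∉ A) = Aᶜ := by ext j; simp
      rw [hA, hAc]
      by_cases hi : i ∈ A
      · rw [if_pos hi]
        have z1 : ∑ j ∈ A, g (i, j) = 0 :=
          Finset.sum_eq_zero (fun j hj => by rw [hg]; exact if_pos (iff_of_true hi hj))
        have z2 : ∑ j ∈ Aᶜ, g (i, j) = ∑ j ∈ Aᶜ, wt N q p i j :=
          Finset.sum_congr rfl (fun j hj => by
            rw [hg]
            exact if_neg (fun h => (Finset.mem_compl.1 hj) (h.1 hi)))
        rw [z1, z2, zero_add]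
      · rw [if_neg hi]
        have z1 : ∑ j ∈ A, g (i, j) = ∑ j ∈ A, wt N q p i j :=
          Finset.sum_congr rfl (fun j hj => by
            rw [hg]
            exact if_neg (fun h => hi (h.2 hj)))
        have z2 : ∑ j ∈ Aᶜ, g (i, j) = 0 :=
          Finset.sum_eq_zero (fun j hj => by
            rw [hg]
            exact if_pos (iff_of_false hi (Finset.mem_compl.1 hj)))
        rw [z1, z2, add_zero]
    rw [Finset.sum_congr rfl (fun i _ => inner i)]
    rw [← Finset.sum_filter_add_sum_filter_not Finset.univ (fun i => i ∈ A)]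
    have hA : Finset.univ.filter (fun i : Fin N => i ∈ A) = A := by ext i; simp
    have hAc : Finset.univ.filter (fun i : Fin N => i ∉ A) = Aᶜ := by ext i; simp
    rw [hA, hAc]
    have t1 : ∑ i ∈ A, (if i ∈ A then ∑ j ∈ Aᶜ, wt N q p i j else ∑ j ∈ A, wt N q p i j)
        = cut N q p A :=
      Finset.sum_congr rfl (fun i hi => if_pos hi)
    have t2 : ∑ i ∈ Aᶜ, (if i ∈ A then ∑ j ∈ Aᶜ, wt N q p i j else ∑ j ∈ A, wt N q p i j)
        = cut N q p A := by
      rw [Finset.sum_congr rfl (fun i hi => if_neg (Finset.mem_compl.1 hi))]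
      rw [Finset.sum_comm]
      rw [cut]
      apply Finset.sum_congr rfl
      intro i _
      apply Finset.sum_congr rfl
      intro j _
      exact wt_symm N q p j i
    rw [t1, t2]
    ring
  linarith [hsum2, hsum3]

lemma guessA_eq (N : ℕ) (q : Fin N → ℝ) (hnn : ∀ i, 0 ≤ q i) (hsum : ∑ i, q i = 1)
    (p : ℝ) (hp0 : 0 ≤ p) (hp : p ≤ 1 / 2) (A : Finset (Fin N)) :
    guessA N q p A = (1 + ∑ z ∈ PS N, min (q z.1) (q z.2)) - cut N q p A := by
  have h1p : (0:ℝ) ≤ 1 - p := by linarith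
  set a : Bool → Fin N → ℝ :=
    fun y i => q i * (if ((i ∈ A) ↔ (y = true)) then 1 - p else p) with ha
  have hinner : ∀ y : Bool,
      Finset.univ.inf' ⟨1, Finset.mem_univ 1⟩
        (fun σ : Equiv.Perm (Fin N) => ∑ k : Fin N,
          ((k : ℝ) + 1) * q (σ k) * (if ((σ k ∈ A) ↔ (y = true)) then 1 - p else p))
      = ∑ i, a y i + ∑ z ∈ PS N, min (a y z.1) (a y z.2) := by
    intro y
    rw [← inf_perm_formula (a y)]
    congr 1
    funext σ
    apply Finset.sum_congr rfl
    intro k _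
    rw [ha]
    ring
  rw [guessA]
  rw [Finset.sum_congr rfl (fun y _ => hinner y)]
  rw [Finset.sum_add_distrib]
  have e1 : ∑ y : Bool, ∑ i, a y i = 1 := by
    rw [Finset.sum_comm, ← hsum]
    apply Finset.sum_congr rfl
    intro i _
    rw [Fintype.sum_bool]
    simp only [ha]
    by_cases hi : i ∈ A
    · rw [if_pos (iff_of_true hi trivial), if_neg (fun h => Bool.false_ne_true (h.1 hi))]
      ring
    · rw [if_neg (fun h => hi (h.2 trivial)), if_pos (iff_of_false hi Bool.false_ne_true)]
      ring
  have e2 : ∑ y : Bool, ∑ z ∈ PS N, min (a y z.1) (a y z.2)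
      = ∑ z ∈ PS N, min (q z.1) (q z.2) - cut N q p A := by
    rw [Finset.sum_comm, ← PS_cut N q p A, ← Finset.sum_sub_distrib]
    apply Finset.sum_congr rfl
    intro z _
    rw [Fintype.sum_bool]
    simp only [ha]
    by_cases h1 : z.1 ∈ A <;> by_cases h2 : z.2 ∈ A
    · rw [if_pos (iff_of_true h1 trivial), if_pos (iff_of_true h2 trivial),
        if_neg (fun h => Bool.false_ne_true (h.1 h1)),
        if_neg (fun h => Bool.false_ne_true (h.1 h2)),
        if_pos (iff_of_true h1 h2)]
      rw [← min_mul_of_nonneg _ _ h1p, ← min_mul_of_nonneg _ _ hp0]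
      ring
    · rw [if_pos (iff_of_true h1 trivial), if_neg (fun h => h2 (h.2 trivial)),
        if_neg (fun h => Bool.false_ne_true (h.1 h1)),
        if_pos (iff_of_false h2 Bool.false_ne_true),
        if_neg (fun hc : _ ↔ _ => h2 (hc.1 h1))]
      rw [wt]
      exact cross_pair (q z.1) (q z.2) p (hnn z.1) (hnn z.2) hp0 hp
    · rw [if_neg (fun h => h1 (h.2 trivial)), if_pos (iff_of_true h2 trivial),
        if_pos (iff_of_false h1 Bool.false_ne_true),
        if_neg (fun h => Bool.false_ne_true (h.1 h2)),
        if_neg (fun hc : _ ↔ _ => h1 (hc.2 h2))]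
      rw [wt, add_comm]
      exact cross_pair (q z.1) (q z.2) p (hnn z.1) (hnn z.2) hp0 hp
    · rw [if_neg (fun h => h1 (h.2 trivial)), if_neg (fun h => h2 (h.2 trivial)),
        if_pos (iff_of_false h1 Bool.false_ne_true),
        if_pos (iff_of_false h2 Bool.false_ne_true),
        if_pos (iff_of_false h1 h2)]
      rw [← min_mul_of_nonneg _ _ hp0, ← min_mul_of_nonneg _ _ h1p]
      ring
  rw [e1, e2]
  ring

theorem stmt_0 (N : ℕ) (hN : 1 ≤ N) (q : Fin N → ℝ)
    (hnn : ∀ i, 0 ≤ q i) (hsum : ∑ i, q i = 1)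
    (hsort : ∀ i j : Fin N, i ≤ j → q j ≤ q i)
    (p : ℝ) (hp0 : 0 ≤ p) (hp : p ≤ 1 / 2) :
    guessA N q p (zigzag N) ≤ guessOpt N q p + (1 / 4) * (1 - 2 * p) := by
  have hformula := guessA_eq N q hnn hsum p hp0 hp
  have hkey := cut_le_zigzag N hN q hsort p hp0 hp
  have h1 : guessA N q p (zigzag N) ≤ guessOpt N q p := by
    rw [guessOpt]
    apply Finset.le_inf'
    intro A _
    rw [hformula A, hformula (zigzag N)]
    linarith [hkey A]
  linarith [h1]
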